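/- Let T and Q be real symmetric positive definite 2×2 matrices with largest eigenvalues λ_T and λ_Q respectively, and let C be an invertible real 2×2 matrix. Then the matrix T·C⁻¹·Q·C⁻ᵀ has a real eigenvalue μ with 0 < μ ≤ λ_T·λ_Q/‖C‖², where ‖C‖ denotes the operator norm of C with respect to the Euclidean norm on ℝ². -/

import Mathlib

open Matrix

/-- For a real square matrix, `opNorm C` is the operator norm of the induced linear map
on Euclidean space (the largest singular value). -/
noncomputable def opNorm (C : Matrix (Fin 2) (Fin 2) ℝ) : ℝ :=
  ‖Matrix.toEuclideanCLM (𝕜 := ℝ) C‖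

/-- `μ` is an eigenvalue of the real matrix `M`. -/
def IsEigenvalue (M : Matrix (Fin 2) (Fin 2) ℝ) (μ : ℝ) : Prop :=
  ∃ v : Fin 2 → ℝ, v ≠ 0 ∧ M.mulVec v = μ • v

lemma quad_nonneg {p b r x y : ℝ} (hsum : 0 ≤ p + r) (hdet : b^2 ≤ p*r) :
    0 ≤ p*x^2 + 2*b*x*y + r*y^2 := by
  have hpr : 0 ≤ p * r := le_trans (sq_nonneg b) hdet
  have hp : 0 ≤ p := by nlinarith
  have hr : 0 ≤ r := by nlinarith
  rcases eq_or_lt_of_le hp with hp0 | hp0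
  · have hb : b = 0 := by nlinarith
    rw [hb, ← hp0]
    nlinarith [mul_nonneg hr (sq_nonneg y)]
  · nlinarith [sq_nonneg (p*x + b*y), mul_nonneg (sub_nonneg.2 hdet) (sq_nonneg y)]

lemma dot_self_nonneg (x : Fin 2 → ℝ) : 0 ≤ x ⬝ᵥ x :=
  Finset.sum_nonneg fun i _ => mul_self_nonneg _

lemma dot_self_pos {x : Fin 2 → ℝ} (hx : x ≠ 0) : 0 < x ⬝ᵥ x :=
  lt_of_le_of_ne (dot_self_nonneg x) (fun h => hx (dotProduct_self_eq_zero.mp h.symm))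

lemma min_eig (A : Matrix (Fin 2) (Fin 2) ℝ) (h : A 1 0 = A 0 1) :
    ∃ μ : ℝ, (∃ v : Fin 2 → ℝ, v ≠ 0 ∧ A *ᵥ v = μ • v) ∧
      ∀ x : Fin 2 → ℝ, μ * (x ⬝ᵥ x) ≤ x ⬝ᵥ (A *ᵥ x) := by
  set a := A 0 0 with ha
  set b := A 0 1 with hb'
  set d := A 1 1 with hd
  set D := Real.sqrt ((a-d)^2 + 4*b^2) with hDdef
  have hD0 : 0 ≤ D := Real.sqrt_nonneg _
  have hD2 : D^2 = (a-d)^2 + 4*b^2 := Real.sq_sqrt (by positivity)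
  set μ := (a + d - D)/2 with hμ
  have hchar : μ^2 - (a+d)*μ + (a*d - b^2) = 0 := by
    rw [hμ]; field_simp; nlinarith [hD2]
  refine ⟨μ, ?_, ?_⟩
  · by_cases hb : b = 0
    · have habs : D = |a - d| := by rw [hDdef, hb]; simpa using Real.sqrt_sq_eq_abs (a-d)
      rcases le_total a d with had | had
      · have hμa : μ = a := by rw [hμ, habs, abs_of_nonpos (by linarith)]; ring
        refine ⟨![1,0], fun hv => by have := congrFun hv 0; norm_num at this, ?_⟩
        funext i; fin_cases i <;>
          simp [Matrix.mulVec, dotProduct, Fin.sum_univ_two, hμa, ← ha, ← hb', ← hd, h, hb]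
      · have hμd : μ = d := by rw [hμ, habs, abs_of_nonneg (by linarith)]; ring
        refine ⟨![0,1], fun hv => by have := congrFun hv 1; norm_num at this, ?_⟩
        funext i; fin_cases i <;>
          simp [Matrix.mulVec, dotProduct, Fin.sum_univ_two, hμd, ← ha, ← hb', ← hd, h, hb]
    · refine ⟨![b, μ - a], fun hv => hb ?_, ?_⟩
      · have := congrFun hv 0; simpa using this
      · funext i; fin_cases i <;>
          simp [Matrix.mulVec, dotProduct, Fin.sum_univ_two, ← ha, ← hb', ← hd, h]
        · ring
        · nlinarith [hchar]
  · intro x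
    have hexp : x ⬝ᵥ (A *ᵥ x) = a*(x 0)^2 + 2*b*(x 0)*(x 1) + d*(x 1)^2 := by
      simp [Matrix.mulVec, dotProduct, Fin.sum_univ_two, ← ha, ← hb', ← hd, h]; ring
    have hdot : x ⬝ᵥ x = (x 0)^2 + (x 1)^2 := by
      simp [dotProduct, Fin.sum_univ_two]; ring
    rw [hexp, hdot]
    have hsum : 0 ≤ (a - μ) + (d - μ) := by rw [hμ]; linarith
    have hdet : b^2 ≤ (a - μ) * (d - μ) := by nlinarith [hchar]
    nlinarith [quad_nonneg (x := x 0) (y := x 1) hsum hdet]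

lemma max_eig (A : Matrix (Fin 2) (Fin 2) ℝ) (h : A 1 0 = A 0 1) :
    ∃ μ : ℝ, (∃ v : Fin 2 → ℝ, v ≠ 0 ∧ A *ᵥ v = μ • v) ∧
      ∀ x : Fin 2 → ℝ, x ⬝ᵥ (A *ᵥ x) ≤ μ * (x ⬝ᵥ x) := by
  obtain ⟨ν, ⟨v, hv, hev⟩, hray⟩ := min_eig (-A) (by simp [h])
  refine ⟨-ν, ⟨v, hv, ?_⟩, fun x => ?_⟩
  · rw [Matrix.neg_mulVec] at hev
    have : A *ᵥ v = -(ν • v) := by rw [← hev]; simp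
    rw [this, ← neg_smul]
  · have := hray x
    rw [Matrix.neg_mulVec, dotProduct_neg] at this
    nlinarith [this]

lemma mulVec_ne_zero {B : Matrix (Fin 2) (Fin 2) ℝ} (hB : IsUnit B.det) {x : Fin 2 → ℝ}
    (hx : x ≠ 0) : B *ᵥ x ≠ 0 := by
  intro h0
  apply hx
  have h1 : B⁻¹ *ᵥ (B *ᵥ x) = x := by
    rw [Matrix.mulVec_mulVec, Matrix.nonsing_inv_mul B hB, Matrix.one_mulVec]
  rw [← h1, h0, Matrix.mulVec_zero]

lemma dot_conj (B M : Matrix (Fin 2) (Fin 2) ℝ) (x : Fin 2 → ℝ) :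
    x ⬝ᵥ ((Bᵀ * M * B) *ᵥ x) = (B *ᵥ x) ⬝ᵥ (M *ᵥ (B *ᵥ x)) := by
  rw [← Matrix.mulVec_mulVec, ← Matrix.mulVec_mulVec, Matrix.dotProduct_mulVec,
    Matrix.vecMul_transpose]

lemma exists_norm_attain (f : EuclideanSpace ℝ (Fin 2) →L[ℝ] EuclideanSpace ℝ (Fin 2)) :
    ∃ u : EuclideanSpace ℝ (Fin 2), ‖u‖ = 1 ∧ ‖f u‖ = ‖f‖ := by
  obtain ⟨u, huS, hmax⟩ := (isCompact_sphere (0 : EuclideanSpace ℝ (Fin 2)) 1).exists_isMaxOn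
    (NormedSpace.sphere_nonempty.mpr zero_le_one) (f.continuous.norm.continuousOn)
  have hu : ‖u‖ = 1 := mem_sphere_zero_iff_norm.mp huS
  refine ⟨u, hu, le_antisymm (by simpa [hu] using f.le_opNorm u) ?_⟩
  refine f.opNorm_le_bound (norm_nonneg _) (fun y => ?_)
  rcases eq_or_ne y 0 with rfl | hy
  · simp
  · have hny : ‖y‖ ≠ 0 := norm_ne_zero_iff.mpr hy
    have hmem : (‖y‖⁻¹ • y) ∈ Metric.sphere (0 : EuclideanSpace ℝ (Fin 2)) 1 := by
      rw [mem_sphere_zero_iff_norm, norm_smul, norm_inv, norm_norm, inv_mul_cancel₀ hny]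
    have h2 : ‖f (‖y‖⁻¹ • y)‖ ≤ ‖f u‖ := hmax hmem
    rw [_root_.map_smul, norm_smul, norm_inv, norm_norm] at h2
    calc ‖f y‖ = ‖y‖ * (‖y‖⁻¹ * ‖f y‖) := by field_simp
      _ ≤ ‖y‖ * ‖f u‖ := mul_le_mul_of_nonneg_left h2 (norm_nonneg y)
      _ = ‖f u‖ * ‖y‖ := mul_comm _ _

lemma conjT_eq_transpose (C : Matrix (Fin 2) (Fin 2) ℝ) : Cᴴ = Cᵀ := by
  ext i j; simp [Matrix.conjTranspose_apply]

set_option synthInstance.maxHeartbeats 1000000 in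
lemma opNorm_transpose (C : Matrix (Fin 2) (Fin 2) ℝ) : opNorm Cᵀ = opNorm C := by
  unfold opNorm
  rw [← conjT_eq_transpose]
  have h : Matrix.toEuclideanCLM (𝕜 := ℝ) Cᴴ = star (Matrix.toEuclideanCLM (𝕜 := ℝ) C) :=
    map_star _ C
  rw [h, ContinuousLinearMap.star_eq_adjoint]
  exact ContinuousLinearMap.adjoint.norm_map _

lemma norm_sq_eq_dot (u : EuclideanSpace ℝ (Fin 2)) :
    (WithLp.equiv 2 _ u) ⬝ᵥ (WithLp.equiv 2 _ u) = ‖u‖^2 := by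
  rw [EuclideanSpace.norm_eq, Real.sq_sqrt (by positivity)]
  simp [dotProduct, sq, Real.norm_eq_abs, abs_mul_abs_self, WithLp.equiv_apply]

lemma clm_mulVec (C : Matrix (Fin 2) (Fin 2) ℝ) (u : EuclideanSpace ℝ (Fin 2)) :
    WithLp.equiv 2 _ ((Matrix.toEuclideanCLM (𝕜 := ℝ) C) u) = C *ᵥ (WithLp.equiv 2 _ u) := by
  exact Matrix.ofLp_toEuclideanCLM C u

theorem smallest_eigenvalue_bound
    (T Q C : Matrix (Fin 2) (Fin 2) ℝ)
    (hT : T.IsSymm) (hTpos : T.PosDef)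
    (hQ : Q.IsSymm) (hQpos : Q.PosDef)
    (hC : IsUnit C.det)
    (lamT lamQ : ℝ)
    (hlamT : IsEigenvalue T lamT) (hlamTmax : ∀ μ, IsEigenvalue T μ → μ ≤ lamT)
    (hlamQ : IsEigenvalue Q lamQ) (hlamQmax : ∀ μ, IsEigenvalue Q μ → μ ≤ lamQ) :
    ∃ μ : ℝ, IsEigenvalue (T * C⁻¹ * Q * (C⁻¹)ᵀ) μ ∧
      0 < μ ∧ μ ≤ lamT * lamQ / (opNorm C)^2 := by
  classical
  have hQt : Qᵀ = Q := hQ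
  open scoped MatrixOrder in
  set R := CFC.sqrt T with hRdef
  open scoped MatrixOrder in
  have hRR : R * R = T := CFC.sqrt_mul_sqrt_self T hTpos.posSemidef.nonneg
  have hRt : Rᵀ = R := by
    open scoped MatrixOrder in
    rw [← conjT_eq_transpose]; exact (CFC.sqrt_nonneg T).posSemidef.1
  have hdetT : IsUnit T.det := hTpos.det_pos.ne'.isUnit
  have hdet2 : R.det * R.det = T.det := by rw [← Matrix.det_mul, hRR]
  have hdetR : IsUnit R.det := by
    have hne : R.det ≠ 0 := by
      intro h0
      exact hTpos.det_pos.ne' (by rw [← hdet2, h0, zero_mul])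
    exact hne.isUnit
  have hRRinv : R * R⁻¹ = 1 := Matrix.mul_nonsing_inv R hdetR
  have hRinvR : R⁻¹ * R = 1 := Matrix.nonsing_inv_mul R hdetR
  have hRinvT : (R⁻¹)ᵀ = R⁻¹ := by rw [Matrix.transpose_nonsing_inv, hRt]
  have hCC : C * C⁻¹ = 1 := Matrix.mul_nonsing_inv C hC
  have hdetCinv : IsUnit (C⁻¹).det := (Matrix.isUnit_nonsing_inv_det C hC)
  set S := C⁻¹ * Q * (C⁻¹)ᵀ with hSdef
  set A := R * S * R with hAdef
  have hAfact : A = ((C⁻¹)ᵀ * R)ᵀ * Q * ((C⁻¹)ᵀ * R) := by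
    rw [hAdef, hSdef]
    simp [Matrix.transpose_mul, Matrix.transpose_transpose, hRt, Matrix.mul_assoc]
  have hAt : Aᵀ = A := by
    rw [hAfact]
    simp [Matrix.transpose_mul, Matrix.transpose_transpose, hQt, Matrix.mul_assoc]
  have hA10 : A 1 0 = A 0 1 := by
    have := congrFun (congrFun hAt 1) 0
    simpa using this.symm
  obtain ⟨μ, ⟨v, hv, hev⟩, hray⟩ := min_eig A hA10
  have hApos : ∀ x : Fin 2 → ℝ, x ≠ 0 → 0 < x ⬝ᵥ (A *ᵥ x) := by
    intro x hx
    rw [hAfact, dot_conj]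
    have hdetB : IsUnit ((C⁻¹)ᵀ * R).det := by
      rw [Matrix.det_mul, Matrix.det_transpose]
      exact hdetCinv.mul hdetR
    have hy : ((C⁻¹)ᵀ * R) *ᵥ x ≠ 0 := mulVec_ne_zero hdetB hx
    simpa using hQpos.dotProduct_mulVec_pos hy
  have hμpos : 0 < μ := by
    have h1 : 0 < v ⬝ᵥ (A *ᵥ v) := hApos v hv
    rw [hev, dotProduct_smul, smul_eq_mul] at h1
    have h2 : 0 < v ⬝ᵥ v := dot_self_pos hv
    nlinarith [h1, h2]
  have hM : (T * C⁻¹ * Q * (C⁻¹)ᵀ) * R = R * A := by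
    rw [hAdef, hSdef, ← hRR]
    simp [Matrix.mul_assoc]
  refine ⟨μ, ⟨R *ᵥ v, ?_, ?_⟩, hμpos, ?_⟩
  · exact mulVec_ne_zero hdetR hv
  · show (T * C⁻¹ * Q * (C⁻¹)ᵀ) *ᵥ (R *ᵥ v) = μ • (R *ᵥ v)
    rw [Matrix.mulVec_mulVec, hM, ← Matrix.mulVec_mulVec, hev, Matrix.mulVec_smul]
  · -- the bound
    set f := Matrix.toEuclideanCLM (𝕜 := ℝ) Cᵀ with hf
    obtain ⟨u, hu1, hufu⟩ := exists_norm_attain f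
    have hk : ‖f u‖ = opNorm C := by
      rw [hufu]; exact opNorm_transpose C
    set u' : Fin 2 → ℝ := WithLp.equiv 2 _ u with hu'
    set x : Fin 2 → ℝ := Cᵀ *ᵥ u' with hx
    have hxu : x = WithLp.equiv 2 _ (f u) := (clm_mulVec Cᵀ u).symm
    have hxx : x ⬝ᵥ x = (opNorm C)^2 := by rw [hxu, norm_sq_eq_dot, hk]
    have hu'ne : u' ≠ 0 := by
      intro h0
      have : ‖u‖ = 0 := by
        rw [EuclideanSpace.norm_eq]
        simp only [hu'] at h0
        have : ∀ i, u i = 0 := fun i => by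
          have := congrFun h0 i; simpa [WithLp.equiv_apply] using this
        simp [this]
      rw [hu1] at this; norm_num at this
    have hxne : x ≠ 0 := by
      rw [hx]
      refine mulVec_ne_zero ?_ hu'ne
      rw [Matrix.det_transpose]; exact hC
    have hk2pos : 0 < (opNorm C)^2 := by
      have := dot_self_pos hxne; rwa [hxx] at this
    have hCx : (C⁻¹)ᵀ *ᵥ x = u' := by
      rw [hx, Matrix.mulVec_mulVec, ← Matrix.transpose_mul, hCC]
      simp
    have huu : u' ⬝ᵥ u' = 1 := by rw [hu', norm_sq_eq_dot, hu1]; norm_num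
    -- lamQ bound
    have hQ10 : Q 1 0 = Q 0 1 := by
      have := congrFun (congrFun hQt 1) 0
      simpa using this.symm
    obtain ⟨νQ, hνQeig, hνQray⟩ := max_eig Q hQ10
    have hνQ : νQ ≤ lamQ := hlamQmax νQ hνQeig
    have hSx : x ⬝ᵥ (S *ᵥ x) = u' ⬝ᵥ (Q *ᵥ u') := by
      have hSf : S = ((C⁻¹)ᵀ)ᵀ * Q * (C⁻¹)ᵀ := by
        rw [hSdef, Matrix.transpose_transpose]
      rw [hSf, dot_conj, hCx]
    have hSle : x ⬝ᵥ (S *ᵥ x) ≤ lamQ := by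
      rw [hSx]
      calc u' ⬝ᵥ (Q *ᵥ u') ≤ νQ * (u' ⬝ᵥ u') := hνQray u'
        _ = νQ := by rw [huu, mul_one]
        _ ≤ lamQ := hνQ
    -- Rayleigh at z
    set z := R⁻¹ *ᵥ x with hz
    have hfactA : (R⁻¹)ᵀ * A * R⁻¹ = S := by
      rw [hRinvT, hAdef]
      calc R⁻¹ * (R * S * R) * R⁻¹ = (R⁻¹ * R) * S * (R * R⁻¹) := by
            simp only [Matrix.mul_assoc]
        _ = S := by rw [hRinvR, hRRinv, Matrix.one_mul, Matrix.mul_one]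
    have hzAz : z ⬝ᵥ (A *ᵥ z) = x ⬝ᵥ (S *ᵥ x) := by
      rw [hz, ← dot_conj, hfactA]
    -- z ⬝ z = x ⬝ T⁻¹ x
    have hzz : z ⬝ᵥ z = x ⬝ᵥ (T⁻¹ *ᵥ x) := by
      have hTinv : T⁻¹ = (R⁻¹)ᵀ * 1 * R⁻¹ := by
        rw [hRinvT, Matrix.mul_one, ← hRR, Matrix.mul_inv_rev]
      rw [hTinv, dot_conj, Matrix.one_mulVec, hz]
    -- min eigenvalue of T⁻¹
    have hTt : Tᵀ = T := hT
    have hTinvt : (T⁻¹) 1 0 = (T⁻¹) 0 1 := by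
      have hTit : (T⁻¹)ᵀ = T⁻¹ := by rw [Matrix.transpose_nonsing_inv, hTt]
      have := congrFun (congrFun hTit 1) 0
      simpa using this.symm
    obtain ⟨ν, ⟨w, hw, hwe⟩, hνray⟩ := min_eig T⁻¹ hTinvt
    have hνpos : 0 < ν := by
      have h1 : 0 < w ⬝ᵥ (T⁻¹ *ᵥ w) := by simpa using hTpos.inv.dotProduct_mulVec_pos hw
      rw [hwe, dotProduct_smul, smul_eq_mul] at h1
      have h2 : 0 < w ⬝ᵥ w := dot_self_pos hw
      nlinarith [h1, h2]
    have hTw : T *ᵥ w = ν⁻¹ • w := by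
      have h1 : T *ᵥ (T⁻¹ *ᵥ w) = w := by
        rw [Matrix.mulVec_mulVec, Matrix.mul_nonsing_inv T hdetT, Matrix.one_mulVec]
      rw [hwe, Matrix.mulVec_smul] at h1
      calc T *ᵥ w = ν⁻¹ • (ν • (T *ᵥ w)) := by
            rw [smul_smul, inv_mul_cancel₀ hνpos.ne', one_smul]
        _ = ν⁻¹ • w := by rw [h1]
    have hνinv : ν⁻¹ ≤ lamT := hlamTmax _ ⟨w, hw, hTw⟩
    have hlamTpos : 0 < lamT := lt_of_lt_of_le (inv_pos.mpr hνpos) hνinv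
    have hν1 : 1 ≤ ν * lamT := by
      have h1 := mul_le_mul_of_nonneg_left hνinv hνpos.le
      rwa [mul_inv_cancel₀ hνpos.ne'] at h1
    -- (opNorm C)^2 ≤ lamT * (z ⬝ z)
    have hxx0 : 0 ≤ x ⬝ᵥ x := dot_self_nonneg x
    have hTx2 : (opNorm C)^2 ≤ lamT * (z ⬝ᵥ z) := by
      have h1 := hνray x
      rw [← hzz] at h1
      nlinarith [hν1, h1, hxx0, hlamTpos, hxx]
    -- combine
    rw [le_div_iff₀ hk2pos]
    calc μ * opNorm C ^ 2 ≤ μ * (lamT * (z ⬝ᵥ z)) := mul_le_mul_of_nonneg_left hTx2 hμpos.le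
      _ = lamT * (μ * (z ⬝ᵥ z)) := by ring
      _ ≤ lamT * (z ⬝ᵥ (A *ᵥ z)) := mul_le_mul_of_nonneg_left (hray z) hlamTpos.le
      _ = lamT * (x ⬝ᵥ (S *ᵥ x)) := by rw [hzAz]
      _ ≤ lamT * lamQ := mul_le_mul_of_nonneg_left hSle hlamTpos.le
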